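/- If the index set I = {i_1,...,i_n} ⊆ Z_{q^n - 1} is ordinary for q (i.e., there exists a generator α of F_{q^n}^× such that {α^{i_1},...,α^{i_n}} is linearly independent over F_q), then I is q*-valid: there exists a map χ : Z_{q^n - 1} → F_q such that every nonzero word in F_q^n appears on some translate of I. -/

import Mathlib

/-- If the index set `I = {i_1, …, i_n}` is ordinary for `q` (there is a generator `α`
of `Lˣ` with `α^{i_1}, …, α^{i_n}` linearly independent over `K`), then `I` is
`q*`-valid: some `χ : ZMod (q^n - 1) → K` achieves every nonzero word of `Kⁿ` on a
translate of `I`. Here `L/K` are finite fields with `[L : K] = n`, so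
`card L - 1 = q^n - 1`. -/
theorem stmt_9 (K L : Type*) [Field K] [Field L] [Algebra K L]
    [Fintype K] [Fintype L]
    (n : ℕ) (hn : 1 ≤ n) (hrank : Module.finrank K L = n)
    (i : Fin n → ℕ) (hi : Function.Injective i)
    (hord : ∃ α : Lˣ, (∀ u : Lˣ, u ∈ Subgroup.zpowers α) ∧
      LinearIndependent K (fun j : Fin n => ((α : L) ^ (i j)))) :
    ∃ χ : ZMod (Fintype.card L - 1) → K,
      ∀ W : Fin n → K, W ≠ 0 → ∃ t : ZMod (Fintype.card L - 1),
        ∀ j : Fin n, χ (((i j : ℕ) : ZMod (Fintype.card L - 1)) + t) = W j := by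
  classical
  obtain ⟨α, hgen, hli⟩ := hord
  set m := Fintype.card L - 1 with hm
  have hL1 : 1 < Fintype.card L := Fintype.one_lt_card
  have hm0 : 0 < m := by omega
  haveI : NeZero m := ⟨by omega⟩
  have hordα : orderOf α = m := by
    rw [hm, ← Fintype.card_units, ← Nat.card_eq_fintype_card]
    exact orderOf_eq_card_of_forall_mem_zpowers hgen
  -- congruence lemma for powers of α in Lˣ
  have hpow : ∀ a b : ℕ, a ≡ b [MOD m] → α ^ a = α ^ b := by
    intro a b hab
    rw [pow_eq_pow_iff_modEq, hordα]
    exact hab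
  -- the basis given by α^{i j}
  have hcard : Fintype.card (Fin n) = Module.finrank K L := by
    simp [hrank]
  haveI : Nonempty (Fin n) := ⟨⟨0, hn⟩⟩
  let b : Module.Basis (Fin n) K L := basisOfLinearIndependentOfCardEqFinrank hli hcard
  have hb : ∀ j, b j = (α : L) ^ (i j) := by
    intro j
    simp [b, coe_basisOfLinearIndependentOfCardEqFinrank]
  let j0 : Fin n := ⟨0, hn⟩
  let f : L →ₗ[K] K := b.coord j0
  have hf1 : f (b j0) = 1 := by simp [f]
  -- the linear map Φ
  let Φ : L →ₗ[K] (Fin n → K) :=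
    LinearMap.pi (fun j => f ∘ₗ LinearMap.mulLeft K ((α : L) ^ (i j)))
  have hΦ : ∀ (β : L) (j : Fin n), Φ β j = f ((α : L) ^ (i j) * β) := fun _ _ => rfl
  have hΦinj : Function.Injective Φ := by
    rw [← LinearMap.ker_eq_bot]
    rw [LinearMap.ker_eq_bot']
    intro β hβ
    by_contra hβ0
    have hg : (f ∘ₗ LinearMap.mulLeft K β) = 0 := by
      apply b.ext
      intro j
      have := congrFun (congrArg (fun v : Fin n → K => v) hβ) j
      have : Φ β j = 0 := by rw [hβ]; rfl
      rw [hΦ] at this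
      rw [hb j]
      show f (β * (α : L) ^ (i j)) = (0 : L →ₗ[K] K) ((α : L) ^ (i j))
      rw [mul_comm]
      simpa using this
    have : f (b j0) = 0 := by
      have := congrArg (fun g : L →ₗ[K] K => g (β⁻¹ * b j0)) hg
      simpa [mul_comm, mul_assoc, hβ0, mul_left_comm] using this
    rw [hf1] at this
    exact one_ne_zero this
  have hΦsurj : Function.Surjective Φ := by
    have hfr : Module.finrank K L = Module.finrank K (Fin n → K) := by
      simp [hrank]
    exact (LinearMap.injective_iff_surjective_of_finrank_eq_finrank hfr).mp hΦinj
  refine ⟨fun s => f ((α : L) ^ s.val), ?_⟩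
  intro W hW
  obtain ⟨β, hβ⟩ := hΦsurj W
  have hβ0 : β ≠ 0 := by
    rintro rfl
    apply hW
    rw [← hβ]
    simp
  obtain ⟨k, hk⟩ := hgen (Units.mk0 β hβ0)
  set t : ZMod m := (k : ZMod m) with ht
  have hαt : α ^ t.val = Units.mk0 β hβ0 := by
    rw [← hk, ← zpow_natCast]
    rw [zpow_eq_zpow_iff_modEq, hordα]
    have : ((t.val : ℤ) : ZMod m) = ((k : ℤ) : ZMod m) := by
      push_cast
      simp [ht, ZMod.natCast_val, ZMod.intCast_cast]
    exact (ZMod.intCast_eq_intCast_iff' _ _ _).mp this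
  refine ⟨t, fun j => ?_⟩
  have key : α ^ ((((i j : ℕ) : ZMod m)) + t).val = α ^ (i j) * α ^ t.val := by
    rw [← pow_add]
    apply hpow
    rw [← ZMod.natCast_eq_natCast_iff]
    push_cast
    simp [ZMod.natCast_val]
  have keyL : (α : L) ^ ((((i j : ℕ) : ZMod m)) + t).val = (α : L) ^ (i j) * β := by
    have := congrArg (Units.val) key
    rw [hαt] at this
    simpa using this
  show f ((α : L) ^ ((((i j : ℕ) : ZMod m)) + t).val) = W j
  rw [keyL, ← hΦ, hβ]
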